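/- For any fixed point x ∈ ℝ^d and unit vector u, the set function φ(K) = 1 if x ∈ K_u and 0 otherwise, where K_u = {y ∈ K : ⟨u, y⟩ < sup_{z ∈ K} ⟨u, z⟩}, is a monotone valuation on compact convex sets: φ(K ∪ L) + φ(K ∩ L) = φ(K) + φ(L) whenever K ∪ L is convex, and K ⊆ L implies φ(K) ≤ φ(L). -/

import Mathlib

open scoped Classical

/-- `K` with its exposed face in direction `u` removed. -/
noncomputable def faceRemoved {d : ℕ} (M : Set (EuclideanSpace ℝ (Fin d)))
    (u : EuclideanSpace ℝ (Fin d)) : Set (EuclideanSpace ℝ (Fin d)) :=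
  {x ∈ M | inner ℝ u x < sSup ((fun y => (inner ℝ u y : ℝ)) '' M)}

section aux

variable {d : ℕ} {u : EuclideanSpace ℝ (Fin d)} {K L : Set (EuclideanSpace ℝ (Fin d))}

private lemma innerCont (u : EuclideanSpace ℝ (Fin d)) :
    Continuous fun y : EuclideanSpace ℝ (Fin d) => (inner ℝ u y : ℝ) :=
  (innerSL ℝ u).continuous

private lemma bdd (hK : IsCompact K) :
    BddAbove ((fun y => (inner ℝ u y : ℝ)) '' K) :=
  (hK.image (innerCont u)).bddAbove

private lemma le_h (hK : IsCompact K) {x : EuclideanSpace ℝ (Fin d)} (hx : x ∈ K) :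
    (inner ℝ u x : ℝ) ≤ sSup ((fun y => (inner ℝ u y : ℝ)) '' K) :=
  le_csSup (bdd hK) ⟨x, hx, rfl⟩

private lemma h_mono (hL : IsCompact L) (hne : K.Nonempty) (hKL : K ⊆ L) :
    sSup ((fun y => (inner ℝ u y : ℝ)) '' K) ≤ sSup ((fun y => (inner ℝ u y : ℝ)) '' L) :=
  csSup_le_csSup (bdd hL) (hne.image _) (Set.image_mono hKL)

/-- helper: in the union identity, the case `x ∈ K`. -/
private lemma union_case (hK : IsCompact K) (hL : IsCompact L) (hC : Convex ℝ (K ∪ L))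
    (hLne : L.Nonempty) {x : EuclideanSpace ℝ (Fin d)} (hxK : x ∈ K)
    (hlt : (inner ℝ u x : ℝ) < max (sSup ((fun y => (inner ℝ u y : ℝ)) '' K))
      (sSup ((fun y => (inner ℝ u y : ℝ)) '' L))) :
    x ∈ faceRemoved K u ∪ faceRemoved L u := by
  by_cases h1 : (inner ℝ u x : ℝ) < sSup ((fun y => (inner ℝ u y : ℝ)) '' K)
  · exact Or.inl ⟨hxK, h1⟩
  · have hltL : (inner ℝ u x : ℝ) < sSup ((fun y => (inner ℝ u y : ℝ)) '' L) := by
      rcases max_cases (sSup ((fun y => (inner ℝ u y : ℝ)) '' K))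
        (sSup ((fun y => (inner ℝ u y : ℝ)) '' L)) with ⟨he, _⟩ | ⟨he, _⟩ <;> rw [he] at hlt
      · exact absurd hlt h1
      · exact hlt
    obtain ⟨_, ⟨z, hzL, rfl⟩, hz⟩ := exists_lt_of_lt_csSup (hLne.image _) hltL
    -- points strictly inside the segment from x to z lie in L
    have hseg : ∀ t : ℝ, t ∈ Set.Ioc (0:ℝ) 1 → (1 - t) • x + t • z ∈ L := by
      intro t ht
      have hmem : (1 - t) • x + t • z ∈ K ∪ L :=
        hC (Or.inl hxK) (Or.inr hzL) (by linarith [ht.2]) (le_of_lt ht.1) (by ring)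
      rcases hmem with hm | hm
      · exfalso
        have hval : (inner ℝ u ((1 - t) • x + t • z) : ℝ)
            = (1 - t) * inner ℝ u x + t * inner ℝ u z := by
          simp only [inner_add_right, real_inner_smul_right]
        have := le_h (u := u) hK hm
        rw [hval] at this
        have hxk : (inner ℝ u x : ℝ) = sSup ((fun y => (inner ℝ u y : ℝ)) '' K) :=
          le_antisymm (le_h hK hxK) (not_lt.1 h1)
        nlinarith [ht.1]
      · exact hm
    -- hence x is in the closure of L, which is L
    have htend : Filter.Tendsto (fun t : ℝ => (1 - t) • x + t • z) (nhdsWithin 0 (Set.Ioi 0))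
        (nhds x) := by
      have hc : Continuous fun t : ℝ => (1 - t) • x + t • z := by continuity
      have := hc.tendsto 0
      simp only [sub_zero, one_smul, zero_smul, add_zero] at this
      exact this.mono_left nhdsWithin_le_nhds
    have hev : ∀ᶠ t in nhdsWithin (0:ℝ) (Set.Ioi 0), (1 - t) • x + t • z ∈ L := by
      filter_upwards [Ioc_mem_nhdsGT_of_mem (Set.mem_Ico.2 ⟨le_refl 0, zero_lt_one⟩)] with t ht
        using hseg t ht
    have hxL : x ∈ L := hL.isClosed.mem_of_tendsto htend hev
    exact Or.inr ⟨hxL, hltL⟩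

private lemma faceRemoved_union (hK : IsCompact K) (hL : IsCompact L)
    (hC : Convex ℝ (K ∪ L)) :
    faceRemoved (K ∪ L) u = faceRemoved K u ∪ faceRemoved L u := by
  rcases K.eq_empty_or_nonempty with rfl | hKne
  · simp [faceRemoved]
  rcases L.eq_empty_or_nonempty with rfl | hLne
  · simp [faceRemoved]
  have hsup : sSup ((fun y => (inner ℝ u y : ℝ)) '' (K ∪ L))
      = max (sSup ((fun y => (inner ℝ u y : ℝ)) '' K))
        (sSup ((fun y => (inner ℝ u y : ℝ)) '' L)) := by
    rw [Set.image_union]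
    exact csSup_union (bdd hK) (hKne.image _) (bdd hL) (hLne.image _)
  ext w
  constructor
  · rintro ⟨hw, hlt⟩
    rw [hsup] at hlt
    rcases hw with hw | hw
    · exact union_case hK hL hC hLne hw hlt
    · rw [max_comm] at hlt
      rw [Set.union_comm K L] at hC
      rcases union_case hL hK hC hKne hw hlt with h | h
      · exact Or.inr h
      · exact Or.inl h
  · rintro (⟨hw, hlt⟩ | ⟨hw, hlt⟩)
    · exact ⟨Or.inl hw, lt_of_lt_of_le hlt
        ((h_mono (hK.union hL) hKne Set.subset_union_left))⟩
    · exact ⟨Or.inr hw, lt_of_lt_of_le hlt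
        ((h_mono (hK.union hL) hLne Set.subset_union_right))⟩

end aux

section aux2
variable {d : ℕ} {u : EuclideanSpace ℝ (Fin d)} {K L : Set (EuclideanSpace ℝ (Fin d))}

private lemma faceRemoved_inter (hK : IsCompact K) (hL : IsCompact L)
    (hC : Convex ℝ (K ∪ L)) :
    faceRemoved (K ∩ L) u = faceRemoved K u ∩ faceRemoved L u := by
  ext w
  constructor
  · rintro ⟨⟨hwK, hwL⟩, hlt⟩
    have hne : (K ∩ L).Nonempty := ⟨w, hwK, hwL⟩
    exact ⟨⟨hwK, lt_of_lt_of_le hlt (h_mono hK hne Set.inter_subset_left)⟩,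
      ⟨hwL, lt_of_lt_of_le hlt (h_mono hL hne Set.inter_subset_right)⟩⟩
  · rintro ⟨⟨hwK, hltK⟩, hwL, hltL⟩
    obtain ⟨_, ⟨y, hyK, rfl⟩, hy⟩ := exists_lt_of_lt_csSup (Set.Nonempty.image _ ⟨w, hwK⟩) hltK
    obtain ⟨_, ⟨z, hzL, rfl⟩, hz⟩ := exists_lt_of_lt_csSup (Set.Nonempty.image _ ⟨w, hwL⟩) hltL
    simp only at hy hz
    -- the segment [y,z] lies in K ∪ L and meets both K and L, hence meets K ∩ L
    have hsub : segment ℝ y z ⊆ K ∪ L := hC.segment_subset (Or.inl hyK) (Or.inr hzL)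
    have hconn : IsPreconnected (segment ℝ y z) := (convex_segment y z).isPreconnected
    obtain ⟨p, hpseg, hpK, hpL⟩ :=
      isPreconnected_closed_iff.1 hconn K L hK.isClosed hL.isClosed hsub
        ⟨y, left_mem_segment ℝ y z, hyK⟩ ⟨z, right_mem_segment ℝ y z, hzL⟩
    obtain ⟨a, b, ha, hb, hab, rfl⟩ := hpseg
    have hval : (inner ℝ u (a • y + b • z) : ℝ) = a * inner ℝ u y + b * inner ℝ u z := by
      simp only [inner_add_right, real_inner_smul_right]
    have hpgt : (inner ℝ u w : ℝ) < inner ℝ u (a • y + b • z) := by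
      rw [hval]
      rcases ha.lt_or_eq with hapos | haz
      · have h1 : a * (inner ℝ u w : ℝ) < a * inner ℝ u y := mul_lt_mul_of_pos_left hy hapos
        have h2 : b * (inner ℝ u w : ℝ) ≤ b * inner ℝ u z := mul_le_mul_of_nonneg_left hz.le hb
        have h3 : a * (inner ℝ u w : ℝ) + b * inner ℝ u w = inner ℝ u w := by
          rw [← add_mul, hab, one_mul]
        linarith
      · have hb1 : b = 1 := by linarith
        rw [← haz, hb1]; simpa using hz
    refine ⟨⟨hwK, hwL⟩, lt_of_lt_of_le hpgt (le_h ?_ ⟨hpK, hpL⟩)⟩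
    exact hK.inter_right hL.isClosed

end aux2

/-- The set function `K ↦ 𝟙{x ∈ K_u}` is a monotone valuation on compact convex sets. -/
theorem faceRemoved_indicator_monotone_valuation {d : ℕ}
    (x u : EuclideanSpace ℝ (Fin d)) (hu : ‖u‖ = 1) :
    (∀ K L : Set (EuclideanSpace ℝ (Fin d)),
      IsCompact K → Convex ℝ K → IsCompact L → Convex ℝ L → Convex ℝ (K ∪ L) →
      (if x ∈ faceRemoved (K ∪ L) u then (1 : ℤ) else 0)
        + (if x ∈ faceRemoved (K ∩ L) u then (1 : ℤ) else 0)
        = (if x ∈ faceRemoved K u then (1 : ℤ) else 0)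
          + (if x ∈ faceRemoved L u then (1 : ℤ) else 0)) ∧
    (∀ K L : Set (EuclideanSpace ℝ (Fin d)),
      IsCompact K → Convex ℝ K → IsCompact L → Convex ℝ L → K ⊆ L →
      (if x ∈ faceRemoved K u then (1 : ℤ) else 0)
        ≤ (if x ∈ faceRemoved L u then (1 : ℤ) else 0)) := by
  constructor
  · intro K L hK hKc hL hLc hC
    rw [faceRemoved_union hK hL hC, faceRemoved_inter hK hL hC]
    by_cases h1 : x ∈ faceRemoved K u <;> by_cases h2 : x ∈ faceRemoved L u <;>
      simp [h1, h2]
  · intro K L hK hKc hL hLc hKL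
    by_cases h1 : x ∈ faceRemoved K u
    · obtain ⟨hxK, hlt⟩ := h1
      have h2 : x ∈ faceRemoved L u :=
        ⟨hKL hxK, lt_of_lt_of_le hlt (h_mono hL ⟨x, hxK⟩ hKL)⟩
      simp only [h2, if_true]
      split <;> norm_num
    · simp only [h1, if_false]
      split <;> norm_num
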